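/- arXiv:0910.4205 — 3 statements merged into one kernel-verified Lean document; each statement's English description precedes it below -/
import Mathlib

section
/- Let θ be a finite plane tree with Lukaciewicz path V, lexicographic enumeration v⁰ < v¹ < … < v^{#θ−1} of its vertices, and height function H(n) = |v^n| (the length of the sequence v^n, i.e. its distance to the root). Then for every 0 ≤ n ≤ #θ − 1, H(n) = #{ k ∈ {0, 1, …, n−1} : V(k) = min{V(k), V(k+1), …, V(n)} }. -/
namespace IPC
/-- A plane tree: a set of finite sequences of positive integers (vertices), containing
the root `[]`, closed under prefixes, closed under earlier siblings, with labels ≥ 1. -/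
def IsPlaneTree (T : Set (List ℕ)) : Prop :=
  [] ∈ T ∧
  (∀ v ∈ T, ∀ u : List ℕ, u <+: v → u ∈ T) ∧
  (∀ (v : List ℕ) (i j : ℕ), v ++ [i] ∈ T → 1 ≤ j → j ≤ i → v ++ [j] ∈ T) ∧
  (∀ v ∈ T, ∀ i ∈ v, 1 ≤ i)
/-- `kv T v` : number of children of the vertex `v` in `T`. -/
noncomputable def kv (T : Set (List ℕ)) (v : List ℕ) : ℕ := {i : ℕ | v ++ [i] ∈ T}.ncard
/-- `rank T v` : number of strict lexicographic predecessors of `v` in `T`. -/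
noncomputable def rank (T : Set (List ℕ)) (v : List ℕ) : ℕ := {u ∈ T | u < v}.ncard
/-- Lukaciewicz path of `T`: `luk T n = ∑_{i<n} (k_{vⁱ} - 1)` where `vⁱ` is the `i`-th
vertex of `T` in lexicographic order. -/
noncomputable def luk (T : Set (List ℕ)) (n : ℕ) : ℤ :=
  ∑ᶠ v ∈ {u ∈ T | rank T u < n}, ((kv T v : ℤ) - 1)
/-- `T^v`: the set of vertices of `T` lexicographically ≤ `v`. -/
def below (T : Set (List ℕ)) (v : List ℕ) : Set (List ℕ) := {u ∈ T | u ≤ v}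
/-- `nEdge T v = n(v,T)`: the number of edges of `T` with exactly one endpoint in `T^v`;
an edge is identified with its child endpoint. -/
noncomputable def nEdge (T : Set (List ℕ)) (v : List ℕ) : ℕ :=
  {c ∈ T | c ≠ [] ∧ Xor' (c.dropLast ∈ below T v) (c ∈ below T v)}.ncard

theorem lex_append_left {p t₁ t₂ : List ℕ} (h : t₁ < t₂) : p ++ t₁ < p ++ t₂ :=
  List.Lex.append_left _ h p

theorem lex_append_cancel : ∀ (p : List ℕ) {t₁ t₂ : List ℕ}, p ++ t₁ < p ++ t₂ → t₁ < t₂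
  | [], _, _, h => h
  | a :: p, t₁, t₂, h => by
    cases h with
    | cons h => exact lex_append_cancel p h
    | rel h => exact absurd h (lt_irrefl a)

theorem prefix_lt {u v : List ℕ} (h : u <+: v) (hne : u ≠ v) : u < v := by
  obtain ⟨t, rfl⟩ := h
  cases t with
  | nil => simp at hne
  | cons c t =>
    have : ([] : List ℕ) < c :: t := List.Lex.nil
    simpa using lex_append_left (p := u) this

theorem lt_cases {u w : List ℕ} (h : u < w) :
    u <+: w ∨ ∃ (p : List ℕ) (s t : ℕ) (u' w' : List ℕ),
      s < t ∧ u = p ++ s :: u' ∧ w = p ++ t :: w' := by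
  induction h with
  | nil => exact Or.inl (List.nil_prefix)
  | @rel a l₁ b l₂ hab => exact Or.inr ⟨[], a, b, l₁, l₂, hab, rfl, rfl⟩
  | @cons a l₁ l₂ h ih =>
    rcases ih with h' | ⟨p, s, t, u', w', hst, rfl, rfl⟩
    · obtain ⟨t, rfl⟩ := h'
      exact Or.inl ⟨t, rfl⟩
    · exact Or.inr ⟨a :: p, s, t, u', w', hst, rfl, rfl⟩

/-- Lemma P : if `dropLast w < x < w` then `dropLast w ++ [c]` is a prefix of `x`
for some `c < getLast w`. -/
theorem parent_structure {w x : List ℕ} (hw : w ≠ []) (h1 : w.dropLast < x) (h2 : x < w) :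
    ∃ (c : ℕ) (x' : List ℕ), x = w.dropLast ++ c :: x' ∧ c < w.getLast hw := by
  rcases lt_cases h1 with hp | ⟨p, s, t, u', w', hst, hdl, hx⟩
  · obtain ⟨t, rfl⟩ := hp
    cases t with
    | nil => exact absurd h1 (by simp [lt_irrefl])
    | cons c x' =>
      refine ⟨c, x', rfl, ?_⟩
      have hwe : w = w.dropLast ++ [w.getLast hw] := (List.dropLast_append_getLast hw).symm
      have h2' : w.dropLast ++ c :: x' < w.dropLast ++ [w.getLast hw] := by rwa [← hwe]
      have := lex_append_cancel _ h2'
      cases this with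
      | rel h => exact h
      | cons h => exact absurd h (List.not_lex_nil)
  · -- split case: contradiction with x < w
    exfalso
    have hwe : w = w.dropLast ++ [w.getLast hw] := (List.dropLast_append_getLast hw).symm
    have e := List.dropLast_append_getLast hw
    rw [hdl] at e
    have : w = p ++ s :: (u' ++ [w.getLast hw]) := e.symm.trans (by simp)
    have hlt : w < x := by
      rw [this, hx]
      exact lex_append_left (List.Lex.rel hst)
    exact absurd h2 (lt_asymm hlt)

/-- sandwich: if `u` is a prefix of `w` and `u ≤ x ≤ w` then `u` is a prefix of `x`. -/
theorem prefix_sandwich {u x w : List ℕ} (hp : u <+: w) (h1 : u ≤ x) (h2 : x ≤ w) :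
    u <+: x := by
  rcases eq_or_lt_of_le h1 with rfl | h1
  · exact List.prefix_rfl
  rcases lt_cases h1 with hp' | ⟨p, s, t, u', x', hst, hu, hx⟩
  · exact hp'
  · exfalso
    rw [hu] at hp
    obtain ⟨r, rfl⟩ := hp
    have hlt : p ++ s :: u' ++ r < x := by
      rw [hx]
      have : (s :: (u' ++ r)) < (t :: x') := List.Lex.rel hst
      simpa using lex_append_left (p := p) this
    exact absurd (lt_of_le_of_lt h2 hlt) (lt_irrefl x)


variable {θ : Set (List ℕ)}

theorem rank_lt_rank (hfin : θ.Finite) {u w : List ℕ} (hu : u ∈ θ) (h : u < w) :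
    rank θ u < rank θ w := by
  apply Set.ncard_lt_ncard _ (hfin.subset (Set.sep_subset _ _))
  constructor
  · rintro x ⟨hx, hxu⟩; exact ⟨hx, lt_trans hxu h⟩
  · intro hsub
    exact absurd (hsub ⟨hu, h⟩).2 (lt_irrefl u)

theorem lt_of_rank_lt (hfin : θ.Finite) {u w : List ℕ} (hw : w ∈ θ)
    (h : rank θ u < rank θ w) : u < w := by
  by_contra h'
  rcases eq_or_lt_of_le (le_of_not_gt h') with rfl | hlt
  · exact absurd h (lt_irrefl _)
  · exact absurd (lt_trans h (rank_lt_rank hfin hw hlt)) (lt_irrefl _)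

theorem le_of_rank_le (hfin : θ.Finite) {u w : List ℕ} (hw : w ∈ θ)
    (h : rank θ u ≤ rank θ w) : u ≤ w := by
  by_contra h'
  exact absurd (lt_of_le_of_lt h (rank_lt_rank hfin hw (lt_of_not_ge h'))) (lt_irrefl _)

theorem rank_lt_ncard (hfin : θ.Finite) {v : List ℕ} (hv : v ∈ θ) :
    rank θ v < θ.ncard := by
  apply Set.ncard_lt_ncard _ hfin
  exact ⟨Set.sep_subset _ _, fun hsub => absurd (hsub hv).2 (lt_irrefl v)⟩

theorem exists_rank_eq (hfin : θ.Finite) {n : ℕ} (hn : n < θ.ncard) :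
    ∃ v ∈ θ, rank θ v = n := by
  classical
  have hinj : Set.InjOn (rank θ) θ := by
    intro a ha b hb hab
    by_contra hne
    rcases lt_or_gt_of_ne hne with h | h
    · exact absurd (rank_lt_rank hfin ha h) (by omega)
    · exact absurd (rank_lt_rank hfin hb h) (by omega)
  have himg : (hfin.toFinset.image (rank θ)) = Finset.range θ.ncard := by
    apply Finset.eq_of_subset_of_card_le
    · intro m hm
      simp only [Finset.mem_image, Set.Finite.mem_toFinset] at hm
      obtain ⟨a, ha, rfl⟩ := hm
      exact Finset.mem_range.mpr (rank_lt_ncard hfin ha)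
    · rw [Finset.card_range, Finset.card_image_of_injOn (by simpa [Set.Finite.coe_toFinset] using hinj)]
      exact le_of_eq (Set.ncard_eq_toFinset_card _ hfin)
  have : n ∈ hfin.toFinset.image (rank θ) := himg ▸ Finset.mem_range.mpr hn
  simp only [Finset.mem_image, Set.Finite.mem_toFinset] at this
  obtain ⟨a, ha, h⟩ := this
  exact ⟨a, ha, h⟩


theorem dropLast_prefix_lt {w : List ℕ} (hw : w ≠ []) : w.dropLast < w := by
  have hne : w.dropLast ≠ w := by
    intro h
    have := congrArg List.length h
    rw [List.length_dropLast] at this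
    have : w.length ≠ 0 := fun h0 => hw (List.length_eq_zero_iff.mp h0)
    omega
  exact prefix_lt (List.dropLast_prefix w) hne

/-- The set appearing in the formula for the Lukaciewicz path. -/
def Sset (θ : Set (List ℕ)) (v : List ℕ) : Set (List ℕ) :=
  {w ∈ θ | w ≠ [] ∧ w.dropLast < v ∧ v < w}

theorem luk_rank (hθ : IsPlaneTree θ) (hfin : θ.Finite) {v : List ℕ} (hv : v ∈ θ) :
    luk θ (rank θ v) = ((Sset θ v).ncard : ℤ) := by
  classical
  obtain ⟨hroot, hpref, hsib, -⟩ := hθ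
  set n := rank θ v with hn
  -- the finsets
  set θfin := hfin.toFinset with hθfin
  set Afin := θfin.filter (fun u => u < v) with hAfin
  set Cfin := θfin.filter (fun w => w ≠ [] ∧ w.dropLast < v) with hCfin
  set Bfin := θfin.filter (fun w => w ≠ [] ∧ w ≤ v) with hBfin
  set Sfin := θfin.filter (fun w => w ≠ [] ∧ w.dropLast < v ∧ v < w) with hSfin
  have hAcoe : {u ∈ θ | rank θ u < n} = (↑Afin : Set (List ℕ)) := by
    ext u
    simp only [hAfin, Finset.coe_filter, Set.mem_setOf_eq, hθfin, Set.Finite.mem_toFinset,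
      Set.mem_setOf_eq]
    constructor
    · rintro ⟨hu, h⟩; exact ⟨hu, lt_of_rank_lt hfin hv h⟩
    · rintro ⟨hu, h⟩; exact ⟨hu, rank_lt_rank hfin hu h⟩
  have hAcard : Afin.card = n := by
    rw [hn, rank, ← Set.ncard_coe_finset]
    congr 1
    ext u
    simp [hAfin, hθfin]
  -- kv as a finset card
  have hkv : ∀ u : List ℕ, kv θ u = (θfin.filter (fun w => w ≠ [] ∧ w.dropLast = u)).card := by
    intro u
    have himg : (↑(θfin.filter (fun w => w ≠ [] ∧ w.dropLast = u)) : Set (List ℕ))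
        = (fun i => u ++ [i]) '' {i | u ++ [i] ∈ θ} := by
      ext w
      simp only [Finset.coe_filter, Set.mem_setOf_eq, hθfin, Set.Finite.mem_toFinset,
        Set.mem_image]
      constructor
      · rintro ⟨hw, hne, hdl⟩
        refine ⟨w.getLast hne, ?_, ?_⟩
        · show u ++ [w.getLast hne] ∈ θ
          rw [← hdl, List.dropLast_append_getLast hne]; exact hw
        · rw [← hdl, List.dropLast_append_getLast hne]
      · rintro ⟨i, hi, rfl⟩
        exact ⟨hi, by simp, by simp⟩
    have hinj : Function.Injective (fun i : ℕ => u ++ [i]) := by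
      intro a b h; simpa using h
    rw [kv, ← Set.ncard_image_of_injective _ hinj, ← himg, Set.ncard_coe_finset]
  -- sum of kv over Afin
  have hbiUnion : Cfin = Afin.biUnion (fun u => θfin.filter (fun w => w ≠ [] ∧ w.dropLast = u)) := by
    ext w
    simp only [hCfin, hAfin, Finset.mem_biUnion, Finset.mem_filter, hθfin,
      Set.Finite.mem_toFinset]
    constructor
    · rintro ⟨hw, hne, hdl⟩
      exact ⟨w.dropLast, ⟨hpref w hw _ (List.dropLast_prefix w), hdl⟩, hw, hne, rfl⟩
    · rintro ⟨u, ⟨hu, hulv⟩, hw, hne, rfl⟩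
      exact ⟨hw, hne, hulv⟩
  have hsumkv : ∑ u ∈ Afin, kv θ u = Cfin.card := by
    rw [hbiUnion, Finset.card_biUnion]
    · exact Finset.sum_congr rfl (fun u _ => hkv u)
    · intro a _ b _ hab
      simp only [Finset.disjoint_left, Finset.mem_filter]
      rintro w ⟨-, -, h1⟩ ⟨-, -, h2⟩
      exact hab (h1 ▸ h2 ▸ rfl)
  -- card of Bfin
  have hBcard : Bfin.card = n := by
    have hLe : θfin.filter (fun w => w ≤ v) = insert v Afin := by
      ext w
      simp only [Finset.mem_filter, Finset.mem_insert, hAfin, Finset.mem_filter, hθfin,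
        Set.Finite.mem_toFinset]
      constructor
      · rintro ⟨hw, hle⟩
        rcases eq_or_lt_of_le hle with rfl | hlt
        · exact Or.inl rfl
        · exact Or.inr ⟨hw, hlt⟩
      · rintro (rfl | ⟨hw, hlt⟩)
        · exact ⟨hv, le_refl _⟩
        · exact ⟨hw, le_of_lt hlt⟩
    have hvnot : v ∉ Afin := by simp [hAfin]
    have hnil : ([] : List ℕ) ∈ θfin.filter (fun w => w ≤ v) := by
      have : ([] : List ℕ) ≤ v := by
        rcases eq_or_ne ([] : List ℕ) v with rfl | h
        · exact le_refl _
        · exact le_of_lt (prefix_lt (List.nil_prefix) h)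
      simp [hθfin, hroot, this]
    have hBe : Bfin = (θfin.filter (fun w => w ≤ v)).erase [] := by
      ext w
      simp only [hBfin, Finset.mem_filter, Finset.mem_erase]
      tauto
    rw [hBe, Finset.card_erase_of_mem hnil, hLe, Finset.card_insert_of_notMem hvnot, hAcard]
    simp
  -- B ⊆ C and C \ B = S
  have hBC : Bfin ⊆ Cfin := by
    intro w hw
    simp only [hBfin, Finset.mem_filter] at hw
    obtain ⟨hwθ, hne, hle⟩ := hw
    simp only [hCfin, Finset.mem_filter]
    exact ⟨hwθ, hne, lt_of_lt_of_le (dropLast_prefix_lt hne) hle⟩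
  have hCB : Cfin \ Bfin = Sfin := by
    ext w
    simp only [hSfin, hCfin, hBfin, Finset.mem_sdiff, Finset.mem_filter]
    constructor
    · rintro ⟨⟨hw, hne, hdl⟩, h2⟩
      refine ⟨hw, hne, hdl, ?_⟩
      rcases lt_or_ge v w with h | h
      · exact h
      · exact absurd ⟨hw, hne, h⟩ h2
    · rintro ⟨hw, hne, hdl, hvw⟩
      exact ⟨⟨hw, hne, hdl⟩, fun h => absurd h.2.2 (not_le_of_gt hvw)⟩
  have hCcard : Cfin.card = n + Sfin.card := by
    have := Finset.card_sdiff_add_card_eq_card hBC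
    rw [hCB, hBcard] at this
    omega
  have hScoe : (Sset θ v).ncard = Sfin.card := by
    rw [← Set.ncard_coe_finset]
    congr 1
    ext w
    simp [Sset, hSfin, hθfin, and_assoc]
  -- assemble
  rw [luk, hAcoe, finsum_mem_coe_finset]
  have : ∑ u ∈ Afin, ((kv θ u : ℤ) - 1) = (∑ u ∈ Afin, (kv θ u : ℤ)) - Afin.card := by
    rw [Finset.sum_sub_distrib]
    simp
  rw [this, hAcard, ← Nat.cast_sum, hsumkv, hCcard, hScoe]
  push_cast
  ring

theorem list_prefix_le {u v : List ℕ} (h : u <+: v) : u ≤ v := by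
  rcases eq_or_ne u v with rfl | hne
  · exact le_refl _
  · exact le_of_lt (prefix_lt h hne)

theorem Sset_mono {u x : List ℕ} (hux : u <+: x) : Sset θ u ⊆ Sset θ x := by
  rintro w ⟨hw, hne, hdl, huw⟩
  obtain ⟨c, u', hu_eq, hcl⟩ := parent_structure hne hdl huw
  obtain ⟨r, rfl⟩ := hux
  have hx_eq : u ++ r = w.dropLast ++ c :: (u' ++ r) := by rw [hu_eq]; simp
  refine ⟨hw, hne, ?_, ?_⟩
  · rw [hx_eq]
    apply prefix_lt ⟨c :: (u' ++ r), rfl⟩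
    intro h; simpa using congrArg List.length h
  · rw [hx_eq]
    have h2 : w.dropLast ++ c :: (u' ++ r) < w.dropLast ++ [w.getLast hne] :=
      lex_append_left (List.Lex.rel hcl)
    rwa [List.dropLast_append_getLast hne] at h2

theorem rank_injOn (hfin : θ.Finite) : Set.InjOn (rank θ) θ := by
  intro a ha b hb hab
  by_contra hne
  rcases lt_or_gt_of_ne hne with h | h
  · exact absurd (rank_lt_rank hfin ha h) (by omega)
  · exact absurd (rank_lt_rank hfin hb h) (by omega)

theorem exists_Sset_ssubset (hθ : IsPlaneTree θ) {u v : List ℕ} (hv : v ∈ θ)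
    (huv : u < v) (hnp : ¬ u <+: v) :
    ∃ x ∈ θ, u < x ∧ x ≤ v ∧ Sset θ x ⊂ Sset θ u := by
  obtain ⟨hroot, hpref, hsib, -⟩ := hθ
  rcases lt_cases huv with hp | ⟨p, s, t, u', v', hst, rfl, rfl⟩
  · exact absurd hp hnp
  set x := p ++ [s + 1] with hx
  have hpt : p ++ [t] ∈ θ := hpref _ hv _ ⟨v', by simp⟩
  have hxθ : x ∈ θ := hsib p t (s + 1) hpt (by omega) (by omega)
  have hux : p ++ s :: u' < x := by
    have : (s :: u' : List ℕ) < (s + 1) :: [] := List.Lex.rel (by omega)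
    simpa [hx] using lex_append_left (p := p) this
  have hxv : x ≤ p ++ t :: v' := by
    rcases eq_or_lt_of_le (show s + 1 ≤ t by omega) with rfl | hlt
    · exact list_prefix_le ⟨v', by simp [hx]⟩
    · apply le_of_lt
      have : ((s + 1) :: [] : List ℕ) < t :: v' := List.Lex.rel hlt
      simpa [hx] using lex_append_left (p := p) this
  refine ⟨x, hxθ, hux, hxv, ?_, ?_⟩
  · -- Sset θ x ⊆ Sset θ (p ++ s :: u')
    rintro w ⟨hw, hne, hdl, hxw⟩
    obtain ⟨c, x₂, hxeq, hcl⟩ := parent_structure hne hdl hxw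
    refine ⟨hw, hne, ?_, lt_trans hux hxw⟩
    -- dropLast w < p ++ s :: u'
    have hdpre : w.dropLast <+: x := ⟨c :: x₂, hxeq.symm⟩
    have hppre : p <+: x := ⟨[s + 1], rfl⟩
    have hle : w.dropLast.length ≤ p.length := by
      have h1 := congrArg List.length hxeq
      simp [hx] at h1
      rw [List.length_dropLast]
      omega
    have hdp : w.dropLast <+: p := List.prefix_of_prefix_length_le hdpre hppre hle
    rcases eq_or_ne w.dropLast p with heq | hne'
    · -- dropLast w = p, proper prefix of p ++ s :: u'
      rw [heq]
      apply prefix_lt ⟨s :: u', rfl⟩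
      intro h; simpa using congrArg List.length h
    · have : w.dropLast <+: p ++ s :: u' := hdp.trans ⟨s :: u', rfl⟩
      apply prefix_lt this
      intro h
      have h2 := congrArg List.length h
      have hlp := hdp.length_le
      rw [List.length_dropLast] at hlp
      simp only [List.length_dropLast, List.length_append, List.length_cons] at h2
      omega
  · -- strictness : x ∈ Sset θ u \ Sset θ x
    intro hsub
    have hxin : x ∈ Sset θ (p ++ s :: u') := by
      refine ⟨hxθ, by simp [hx], ?_, hux⟩
      have : x.dropLast = p := by simp [hx]
      rw [this]
      apply prefix_lt ⟨s :: u', rfl⟩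
      intro h; simpa using congrArg List.length h
    have := hsub hxin
    exact absurd this.2.2.2 (lt_irrefl x)


/-- Height function from the Lukaciewicz path: if `v` is the vertex of
rank `n` in the lexicographic order of a finite plane tree `θ`, then its height
`H(n) = |v|` equals `#{k < n : V(k) = min(V(k),…,V(n))}`. -/
theorem height_eq_card_min (θ : Set (List ℕ)) (hθ : IsPlaneTree θ) (hfin : θ.Finite)
    (n : ℕ) (hn : n + 1 ≤ θ.ncard) (v : List ℕ) (hv : v ∈ θ) (hrk : rank θ v = n) :
    v.length = ((Finset.range n).filter
      (fun k => ∀ j : ℕ, k ≤ j → j ≤ n → luk θ k ≤ luk θ j)).card := by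
  classical
  subst hrk
  have hnlt : rank θ v < θ.ncard := rank_lt_ncard hfin hv
  have hSfin : ∀ y : List ℕ, (Sset θ y).Finite := fun y => hfin.subset (Set.sep_subset _ _)
  have hkey : (Finset.range (rank θ v)).filter
      (fun k => ∀ j : ℕ, k ≤ j → j ≤ rank θ v → luk θ k ≤ luk θ j)
      = (Finset.range v.length).image (fun i => rank θ (v.take i)) := by
    ext k
    simp only [Finset.mem_filter, Finset.mem_range, Finset.mem_image]
    constructor
    · rintro ⟨hk, hcond⟩
      obtain ⟨x, hx, rfl⟩ := exists_rank_eq hfin (lt_trans hk hnlt)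
      have hxv : x < v := lt_of_rank_lt hfin hv hk
      have hpre : x <+: v := by
        by_contra hnp
        obtain ⟨y, hy, hxy, hyv, hss⟩ := exists_Sset_ssubset hθ hv hxv hnp
        have hkj : rank θ x < rank θ y := rank_lt_rank hfin hx hxy
        have hjn : rank θ y ≤ rank θ v := by
          rcases eq_or_lt_of_le hyv with rfl | h
          · exact le_refl _
          · exact le_of_lt (rank_lt_rank hfin hy h)
        have hcard : (Sset θ y).ncard < (Sset θ x).ncard :=
          Set.ncard_lt_ncard hss (hSfin x)
        have hcc := hcond (rank θ y) (le_of_lt hkj) hjn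
        rw [luk_rank hθ hfin hx, luk_rank hθ hfin hy] at hcc
        exact absurd hcc (by exact_mod_cast not_le_of_gt hcard)
      refine ⟨x.length, ?_, ?_⟩
      · have hne : x ≠ v := fun h => by rw [h] at hxv; exact lt_irrefl _ hxv
        rcases lt_or_eq_of_le hpre.length_le with h | h
        · exact h
        · exact absurd (hpre.eq_of_length h) hne
      · congr 1
        exact (List.prefix_iff_eq_take.mp hpre).symm
    · rintro ⟨i, hi, rfl⟩
      have hpre : v.take i <+: v := List.take_prefix i v
      have huθ : v.take i ∈ θ := hθ.2.1 v hv _ hpre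
      have hne : v.take i ≠ v := by
        intro h
        have := congrArg List.length h
        rw [List.length_take] at this
        omega
      have hlt : v.take i < v := prefix_lt hpre hne
      refine ⟨rank_lt_rank hfin huθ hlt, ?_⟩
      intro j hkj hjn
      obtain ⟨x, hx, rfl⟩ := exists_rank_eq hfin (lt_of_le_of_lt hjn hnlt)
      have hux : v.take i ≤ x := le_of_rank_le hfin hx hkj
      have hxv : x ≤ v := le_of_rank_le hfin hv hjn
      have hpx : v.take i <+: x := prefix_sandwich hpre hux hxv
      rw [luk_rank hθ hfin huθ, luk_rank hθ hfin hx]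
      exact_mod_cast Set.ncard_le_ncard (Sset_mono hpx) (hSfin x)
  rw [hkey, Finset.card_image_of_injOn, Finset.card_range]
  intro a ha b hb hab
  simp only [Finset.coe_range, Set.mem_Iio] at ha hb
  have h1 : v.take a ∈ θ := hθ.2.1 v hv _ (List.take_prefix _ _)
  have h2 : v.take b ∈ θ := hθ.2.1 v hv _ (List.take_prefix _ _)
  have h3 := rank_injOn hfin h1 h2 hab
  have h4 := congrArg List.length h3
  rw [List.length_take, List.length_take] at h4
  omega

end IPC
end

section
/- The Lukaciewicz path uniquely determines a finite plane tree: if θ₁ and θ₂ are finite plane trees with #θ₁ = #θ₂ and with equal Lukaciewicz paths (V_{θ₁}(n) = V_{θ₂}(n) for all 0 ≤ n ≤ #θ₁), then θ₁ = θ₂. -/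
namespace IPC
/-- helper: strict extension is larger in lex order -/
lemma lt_append_cons (u t : List ℕ) (a : ℕ) : u < u ++ a :: t := by
  show List.Lex (· < ·) u (u ++ a :: t)
  induction u with
  | nil => exact List.Lex.nil
  | cons x xs ih => exact List.Lex.cons ih

lemma rank_lt_ncard_s5 {T : Set (List ℕ)} (hf : T.Finite) {v : List ℕ} (hv : v ∈ T) :
    rank T v < T.ncard := by
  apply Set.ncard_lt_ncard _ hf
  constructor
  · exact Set.sep_subset _ _
  · intro hsub
    exact absurd (hsub hv).2 (lt_irrefl v)

lemma rank_strictMonoOn {T : Set (List ℕ)} (hf : T.Finite) {u v : List ℕ}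
    (hu : u ∈ T) (huv : u < v) : rank T u < rank T v := by
  apply Set.ncard_lt_ncard _ (hf.subset (Set.sep_subset _ _))
  constructor
  · rintro w ⟨hw, hwu⟩; exact ⟨hw, lt_trans hwu huv⟩
  · intro hsub
    exact absurd (hsub ⟨hu, huv⟩).2 (lt_irrefl u)

lemma lt_of_rank_lt_s5 {T : Set (List ℕ)} (hf : T.Finite) {u v : List ℕ}
    (hv : v ∈ T) (h : rank T u < rank T v) : u < v := by
  by_contra hle
  rcases lt_or_eq_of_le (not_lt.mp hle) with h' | h'
  · exact absurd (rank_strictMonoOn hf hv h') (by omega)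
  · subst h'; omega

lemma rank_nil (T : Set (List ℕ)) : rank T [] = 0 := by
  have : {u ∈ T | u < []} = ∅ := by
    ext u; simp only [Set.mem_setOf_eq, Set.mem_empty_iff_false, iff_false, not_and]
    intro _; exact List.not_lt_nil _
  rw [rank, this, Set.ncard_empty]

lemma eq_nil_of_rank_eq_zero {T : Set (List ℕ)} (hf : T.Finite) (hnil : [] ∈ T) {v : List ℕ}
    (hv : v ∈ T) (hr : rank T v = 0) : v = [] := by
  rcases v with _ | ⟨a, t⟩
  · rfl
  · have : rank T [] < rank T (a :: t) :=
      rank_strictMonoOn hf hnil (List.nil_lt_cons a t)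
    rw [rank_nil, hr] at this; omega

lemma rank_surj {T : Set (List ℕ)} (hf : T.Finite) :
    ∀ i < T.ncard, ∃ v ∈ T, rank T v = i := by
  intro i hi
  classical
  set s := hf.toFinset with hs
  have hcard : s.card = T.ncard := (Set.ncard_eq_toFinset_card _ hf).symm
  have hinj : Set.InjOn (rank T) s := by
    intro a ha b hb hab
    simp only [hs, Finset.mem_coe, Set.Finite.mem_toFinset] at ha hb
    rcases lt_trichotomy a b with h | h | h
    · exact absurd (rank_strictMonoOn hf ha h) (by omega)
    · exact h
    · exact absurd (rank_strictMonoOn hf hb h) (by omega)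
  have himg : s.image (rank T) = Finset.range T.ncard := by
    apply Finset.eq_of_subset_of_card_le
    · intro j hj
      simp only [Finset.mem_image] at hj
      obtain ⟨v, hv, hvj⟩ := hj
      simp only [hs, Set.Finite.mem_toFinset] at hv
      simp only [Finset.mem_range]
      exact hvj ▸ rank_lt_ncard_s5 hf hv
    · rw [Finset.card_range, Finset.card_image_of_injOn hinj, hcard]
  have : i ∈ s.image (rank T) := by rw [himg]; simpa using hi
  simp only [Finset.mem_image] at this
  obtain ⟨v, hv, hvr⟩ := this
  simp only [hs, Set.Finite.mem_toFinset] at hv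
  exact ⟨v, hv, hvr⟩

lemma children_eq {T : Set (List ℕ)} (h : IsPlaneTree T) (hf : T.Finite) (v : List ℕ) :
    {i : ℕ | v ++ [i] ∈ T} = Set.Icc 1 (kv T v) := by
  set C := {i : ℕ | v ++ [i] ∈ T} with hC
  have hCf : C.Finite := by
    have : C = (fun i : ℕ => v ++ [i]) ⁻¹' T := rfl
    rw [this]
    apply Set.Finite.preimage _ hf
    intro a _ b _ hab
    simpa using hab
  rcases Set.eq_empty_or_nonempty C with hemp | hne
  · have : kv T v = 0 := by rw [kv, ← hC, hemp, Set.ncard_empty]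
    rw [this, hemp, Set.Icc_eq_empty (by omega)]
  · have hne' : hCf.toFinset.Nonempty := by
      rwa [Set.Finite.toFinset_nonempty]
    set M := hCf.toFinset.max' hne' with hM
    have hMC : M ∈ C := by
      have := hCf.toFinset.max'_mem hne'
      rwa [Set.Finite.mem_toFinset] at this
    have hCeq : C = Set.Icc 1 M := by
      ext i
      simp only [Set.mem_Icc]
      constructor
      · intro hi
        refine ⟨h.2.2.2 _ hi i (by simp), ?_⟩
        exact hCf.toFinset.le_max' i (by rwa [Set.Finite.mem_toFinset])
      · rintro ⟨h1, h2⟩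
        exact h.2.2.1 v M i hMC h1 h2
    have hkv : kv T v = M := by
      rw [kv, ← hC, hCeq, ← Finset.coe_Icc, Set.ncard_coe_finset, Nat.card_Icc]; omega
    rw [hkv, hCeq]

lemma luk_succ {T : Set (List ℕ)} (hf : T.Finite) {v : List ℕ} (hv : v ∈ T) :
    luk T (rank T v + 1) = ((kv T v : ℤ) - 1) + luk T (rank T v) := by
  have hset : {u ∈ T | rank T u < rank T v + 1} = insert v {u ∈ T | rank T u < rank T v} := by
    ext u
    simp only [Set.mem_setOf_eq, Set.mem_insert_iff]
    constructor
    · rintro ⟨hu, hru⟩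
      rcases Nat.lt_or_ge (rank T u) (rank T v) with h' | h'
      · exact Or.inr ⟨hu, h'⟩
      · left
        have heq : rank T u = rank T v := by omega
        rcases lt_trichotomy u v with h'' | h'' | h''
        · exact absurd (rank_strictMonoOn hf hu h'') (by omega)
        · exact h''
        · exact absurd (rank_strictMonoOn hf hv h'') (by omega)
    · rintro (rfl | ⟨hu, hru⟩)
      · exact ⟨hv, by omega⟩
      · exact ⟨hu, by omega⟩
  rw [luk, hset, finsum_mem_insert _ (by simp) (hf.subset (Set.sep_subset _ _))]
  rfl

/-- The Lukaciewicz path uniquely determines a finite plane tree. -/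
theorem luk_determines_finite_tree (T₁ T₂ : Set (List ℕ))
    (h₁ : IsPlaneTree T₁) (h₂ : IsPlaneTree T₂)
    (hf₁ : T₁.Finite) (hf₂ : T₂.Finite)
    (hcard : T₁.ncard = T₂.ncard)
    (hluk : ∀ n : ℕ, n ≤ T₁.ncard → luk T₁ n = luk T₂ n) :
    T₁ = T₂ := by
  have key : ∀ i : ℕ, ∀ v₁ ∈ T₁, ∀ v₂ ∈ T₂, rank T₁ v₁ = i → rank T₂ v₂ = i → v₁ = v₂ := by
    intro i
    induction i using Nat.strong_induction_on with
    | _ i IH =>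
      rcases i with _ | i
      · intro v₁ hv₁ v₂ hv₂ r₁ r₂
        rw [eq_nil_of_rank_eq_zero hf₁ h₁.1 hv₁ r₁, eq_nil_of_rank_eq_zero hf₂ h₂.1 hv₂ r₂]
      · intro w₁ hw₁ w₂ hw₂ r₁ r₂
        have hiN : i + 1 < T₁.ncard := r₁ ▸ rank_lt_ncard_s5 hf₁ hw₁
        -- shared vertices of rank ≤ i
        have shared : ∀ q ∈ T₁, rank T₁ q ≤ i →
            q ∈ T₂ ∧ rank T₂ q = rank T₁ q ∧ kv T₁ q = kv T₂ q := by
          intro q hq hqi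
          obtain ⟨q₂, hq₂, hr₂⟩ := rank_surj hf₂ (rank T₁ q) (by omega)
          have hqq : q = q₂ := IH (rank T₁ q) (by omega) q hq q₂ hq₂ rfl hr₂
          subst hqq
          refine ⟨hq₂, hr₂, ?_⟩
          have e₁ := luk_succ hf₁ hq
          have e₂ := luk_succ hf₂ hq₂
          rw [hr₂] at e₂
          have l1 := hluk (rank T₁ q) (by omega)
          have l2 := hluk (rank T₁ q + 1) (by omega)
          rw [e₁, e₂] at l2
          rw [l1] at l2
          have : (kv T₁ q : ℤ) = kv T₂ q := by linarith
          exact_mod_cast this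
        -- shared' : the symmetric version for q ∈ T₂
        have shared' : ∀ q ∈ T₂, rank T₂ q ≤ i →
            q ∈ T₁ ∧ rank T₁ q = rank T₂ q ∧ kv T₁ q = kv T₂ q := by
          intro q hq hqi
          obtain ⟨q₁, hq₁, hr₁⟩ := rank_surj hf₁ (rank T₂ q) (by omega)
          have hqq : q₁ = q := IH (rank T₂ q) (by omega) q₁ hq₁ q hq hr₁ rfl
          subst hqq
          obtain ⟨_, h2, h3⟩ := shared q₁ hq₁ (by omega)
          exact ⟨hq₁, by omega, h3⟩
        -- w₁ ∈ T₂
        have mem_other : ∀ (S₁ S₂ : Set (List ℕ)), IsPlaneTree S₁ → IsPlaneTree S₂ →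
            S₁.Finite → S₂.Finite → ∀ w ∈ S₁, rank S₁ w = i + 1 →
            (∀ q ∈ S₁, rank S₁ q ≤ i → q ∈ S₂ ∧ kv S₁ q = kv S₂ q) → w ∈ S₂ := by
          intro S₁ S₂ hp₁ hp₂ hsf₁ hsf₂ w hw hr hsh
          have hwnil : w ≠ [] := by
            intro hnil
            rw [hnil, rank_nil] at hr; omega
          set q := w.dropLast with hqdef
          set m := w.getLast hwnil with hmdef
          have hweq : w = q ++ [m] := (List.dropLast_append_getLast hwnil).symm
          have hq₁ : q ∈ S₁ := hp₁.2.1 w hw q (List.dropLast_prefix w)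
          have hqlt : q < w := by
            conv_rhs => rw [hweq]
            exact lt_append_cons q [] m
          have hqr : rank S₁ q ≤ i := by
            have := rank_strictMonoOn hsf₁ hq₁ hqlt
            omega
          obtain ⟨hq₂, hkv⟩ := hsh q hq₁ hqr
          have hm : m ∈ {j : ℕ | q ++ [j] ∈ S₁} := by
            show q ++ [m] ∈ S₁
            rw [← hweq]; exact hw
          rw [children_eq hp₁ hsf₁] at hm
          rw [hkv, ← children_eq hp₂ hsf₂] at hm
          rw [hweq]; exact hm
        have hw₁₂ : w₁ ∈ T₂ :=
          mem_other T₁ T₂ h₁ h₂ hf₁ hf₂ w₁ hw₁ r₁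
            (fun q hq hqi => ⟨(shared q hq hqi).1, (shared q hq hqi).2.2⟩)
        have hw₂₁ : w₂ ∈ T₁ :=
          mem_other T₂ T₁ h₂ h₁ hf₂ hf₁ w₂ hw₂ r₂
            (fun q hq hqi => ⟨(shared' q hq hqi).1, ((shared' q hq hqi).2.2).symm⟩)
        -- the vertex of rank i
        obtain ⟨v, hv, rv⟩ := rank_surj hf₁ i (by omega)
        obtain ⟨hv₂, rv₂, _⟩ := shared v hv (le_of_eq rv)
        -- v < w₁ and v < w₂
        have hvw₁ : v < w₁ := lt_of_rank_lt_s5 hf₁ hw₁ (by omega)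
        have hvw₂ : v < w₂ := lt_of_rank_lt_s5 hf₂ hw₂ (by rw [rv₂]; omega)
        -- rank T₂ w₁ ≥ i+1
        have hrk₁ : i + 1 ≤ rank T₂ w₁ := by
          have := rank_strictMonoOn hf₂ hv₂ hvw₁
          rw [rv₂, rv] at this
          omega
        have hrk₂ : i + 1 ≤ rank T₁ w₂ := by
          have := rank_strictMonoOn hf₁ hv hvw₂
          rw [rv] at this
          omega
        have h12 : ¬ w₁ < w₂ := by
          intro hlt
          have := rank_strictMonoOn hf₂ hw₁₂ hlt
          omega
        have h21 : ¬ w₂ < w₁ := by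
          intro hlt
          have := rank_strictMonoOn hf₁ hw₂₁ hlt
          omega
        exact le_antisymm (not_lt.mp h21) (not_lt.mp h12)
  ext x
  constructor
  · intro hx
    obtain ⟨y, hy, ry⟩ := rank_surj hf₂ (rank T₁ x) (hcard ▸ rank_lt_ncard_s5 hf₁ hx)
    rw [key (rank T₁ x) x hx y hy rfl ry]
    exact hy
  · intro hx
    obtain ⟨y, hy, ry⟩ := rank_surj hf₁ (rank T₂ x) (hcard ▸ rank_lt_ncard_s5 hf₂ hx)
    rw [← key (rank T₂ x) y hy x hx ry rfl]
    exact hy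

end IPC
end

section
/- Fix an integer σ ≥ 1 and let T be a (z,θ)-tree in which every vertex of every θ_i has at most σ children. Let v = BB_j be a backbone vertex of T lying lexicographically strictly between θ_n and θ_{n+1} (equivalently ℓ_n < j ≤ ℓ_{n+1}), and let u be the lexicographically smallest non-backbone vertex of T with u ≥ v (namely, the root of the copy of θ_{n+1}). Then |#T^v − #T^u| ≤ 1 + ℓ_{n+1} − ℓ_n and |n(v,T) − n(u,T)| ≤ σ + z_{ℓ_{n+1}}. -/
namespace IPC
/-- Address of the backbone vertex `BB_i` of a `(z,θ)`-tree: `BB_i` has `1 + z i`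
children, the last of which is `BB_{i+1}`. -/
def bbz (z : ℕ → ℕ) : ℕ → List ℕ
  | 0 => []
  | i + 1 => bbz z i ++ [z i + 1]

/-- `cum z i = ∑_{m < i} z m`. -/
def cum (z : ℕ → ℕ) (i : ℕ) : ℕ := ∑ m ∈ Finset.range i, z m

/-- `ell z n = ℓ_n`: the height of the backbone vertex to which `θ n` is attached,
i.e. the unique `i` with `cum z i ≤ n < cum z (i+1)` (when `∑ z` diverges). -/
noncomputable def ell (z : ℕ → ℕ) (n : ℕ) : ℕ := sInf {i : ℕ | n < cum z (i + 1)}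

/-- `graftPt z n = u_n`: the `n`-th non-backbone child of a backbone vertex in
lexicographic order; the root of the copy of `θ n`. -/
noncomputable def graftPt (z : ℕ → ℕ) (n : ℕ) : List ℕ :=
  bbz z (ell z n) ++ [n - cum z (ell z n) + 1]

/-- The `(z,θ)`-tree: the sin-tree whose backbone is its rightmost branch, in which
`BB_i` has `1 + z i` children (the last being `BB_{i+1}`), and in which the subtree
rooted at the `n`-th non-backbone child `u_n` of a backbone vertex is a copy of `θ n`. -/
noncomputable def zTree (z : ℕ → ℕ) (θ : ℕ → Set (List ℕ)) : Set (List ℕ) :=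
  Set.range (bbz z) ∪ ⋃ n, (fun w => graftPt z n ++ w) '' θ n

/-! ### Lex order toolkit -/

theorem lex_append_left_iff (a : List ℕ) : ∀ {x y : List ℕ}, a ++ x < a ++ y ↔ x < y := by
  induction a with
  | nil => intro x y; rfl
  | cons h t ih =>
    intro x y
    constructor
    · intro hl
      cases hl with
      | cons hl => exact ih.1 hl
      | rel hr => exact absurd hr (lt_irrefl _)
    · intro hl; exact List.Lex.cons (ih.2 hl)

theorem lex_append_le_iff (a : List ℕ) {x y : List ℕ} : a ++ x ≤ a ++ y ↔ x ≤ y := by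
  rw [← not_lt, ← not_lt, lex_append_left_iff]

theorem prefix_le {a x : List ℕ} (h : a <+: x) : a ≤ x := by
  obtain ⟨t, rfl⟩ := h
  calc a = a ++ [] := by simp
  _ ≤ a ++ t := (lex_append_le_iff a).2 (le_of_not_gt (by simp))

theorem prefix_lt_s9 {a : List ℕ} (x : List ℕ) (h : x ≠ []) : a < a ++ x := by
  have : a ++ [] < a ++ x := (lex_append_left_iff a).2
    (by cases x with
        | nil => simp at h
        | cons b l => exact List.nil_lt_cons b l)
  simpa using this

theorem mid_lt {i k : ℕ} (a s t : List ℕ) (h : i < k) : a ++ i :: s < a ++ k :: t :=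
  (lex_append_left_iff a).2 (List.Lex.rel h)

theorem lt_of_proper_prefix {a b : List ℕ} (hab : a <+: b) (hl : a.length < b.length) :
    a < b := by
  obtain ⟨t, rfl⟩ := hab
  refine prefix_lt_s9 t ?_
  rintro rfl
  simp at hl

theorem prefix_append_cases {p a b : List ℕ} (h : p <+: a ++ b) :
    p <+: a ∨ ∃ b', b' <+: b ∧ p = a ++ b' := by
  rcases le_or_gt p.length a.length with hl | hl
  · exact Or.inl (List.prefix_of_prefix_length_le h (List.prefix_append a b) hl)
  · have hap : a <+: p := List.prefix_of_prefix_length_le (List.prefix_append a b) h hl.le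
    obtain ⟨t, rfl⟩ := hap
    exact Or.inr ⟨t, (List.prefix_append_right_inj a).1 h, rfl⟩

/-! ### bbz / cum / ell toolkit -/

variable {z : ℕ → ℕ} {θ : ℕ → Set (List ℕ)}

theorem bbz_length (z : ℕ → ℕ) : ∀ i, (bbz z i).length = i
  | 0 => rfl
  | i + 1 => by simp [bbz, bbz_length z i]

theorem bbz_decomp {i j : ℕ} (h : i < j) : ∃ t, bbz z j = bbz z i ++ (z i + 1) :: t := by
  induction j with
  | zero => omega
  | succ j ih =>
    rcases Nat.lt_succ_iff_lt_or_eq.1 h with h' | h'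
    · obtain ⟨t, ht⟩ := ih h'
      exact ⟨t ++ [z j + 1], by simp [bbz, ht]⟩
    · subst h'; exact ⟨[], by simp [bbz]⟩

theorem bbz_prefix {i j : ℕ} (h : i ≤ j) : bbz z i <+: bbz z j := by
  rcases eq_or_lt_of_le h with rfl | h
  · exact List.prefix_refl _
  · obtain ⟨t, ht⟩ := bbz_decomp h; exact ⟨(z i + 1) :: t, ht.symm⟩

theorem prefix_bbz {u : List ℕ} {j : ℕ} (h : u <+: bbz z j) : ∃ i ≤ j, u = bbz z i := by
  induction j with
  | zero => exact ⟨0, le_refl 0, List.prefix_nil.1 h⟩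
  | succ j ih =>
    rw [bbz] at h
    rcases List.prefix_concat_iff.1 h with h' | h'
    · exact ⟨j + 1, le_refl _, by rw [h', bbz]⟩
    · obtain ⟨i, hi, hu⟩ := ih h'; exact ⟨i, by omega, hu⟩

theorem cum_mono : Monotone (cum z) := fun _ _ h =>
  Finset.sum_le_sum_of_subset (Finset.range_subset_range.2 h)

theorem cum_succ (i : ℕ) : cum z (i + 1) = cum z i + z i := Finset.sum_range_succ z i

theorem ell_lt (hz : ∀ N : ℕ, ∃ i : ℕ, N < cum z i) (n : ℕ) : n < cum z (ell z n + 1) := by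
  have : {i : ℕ | n < cum z (i + 1)}.Nonempty := by
    obtain ⟨i, hi⟩ := hz n
    cases i with
    | zero => simp [cum] at hi
    | succ i => exact ⟨i, hi⟩
  exact Nat.sInf_mem this

theorem ell_le (n : ℕ) : cum z (ell z n) ≤ n := by
  by_contra h
  push_neg at h
  have h0 : ell z n ≠ 0 := by intro h0; rw [h0] at h; simp [cum] at h
  have heq : ell z n - 1 + 1 = ell z n := by omega
  have : ell z n ≤ ell z n - 1 :=
    Nat.sInf_le (show n < cum z (ell z n - 1 + 1) by rw [heq]; exact h)
  omega

theorem ell_eq {m i : ℕ} (h1 : cum z i ≤ m) (h2 : m < cum z (i + 1)) : ell z m = i := by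
  refine le_antisymm (Nat.sInf_le h2) ?_
  by_contra h
  push_neg at h
  have h4 : cum z (ell z m + 1) ≤ cum z i := cum_mono (show ell z m + 1 ≤ i by omega)
  have h5 : m < cum z (ell z m + 1) := Nat.sInf_mem (⟨i, h2⟩ : {i : ℕ | m < cum z (i + 1)}.Nonempty)
  omega

theorem graft_struct (hz : ∀ N : ℕ, ∃ i : ℕ, N < cum z i) (m : ℕ) :
    1 ≤ m - cum z (ell z m) + 1 ∧ m - cum z (ell z m) + 1 ≤ z (ell z m) ∧
      graftPt z m = bbz z (ell z m) ++ [m - cum z (ell z m) + 1] := by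
  refine ⟨by omega, ?_, rfl⟩
  have h1 := ell_le (z := z) m
  have h2 := ell_lt hz m
  rw [cum_succ] at h2
  omega

theorem graft_inv {i k : ℕ} (h1 : 1 ≤ k) (h2 : k ≤ z i) :
    graftPt z (cum z i + (k - 1)) = bbz z i ++ [k] ∧ ell z (cum z i + (k - 1)) = i := by
  have he : ell z (cum z i + (k - 1)) = i :=
    ell_eq (by omega) (by rw [cum_succ]; omega)
  refine ⟨?_, he⟩
  rw [graftPt, he]
  have : cum z i + (k - 1) - cum z i + 1 = k := by omega
  rw [this]

theorem graft_length (hz : ∀ N : ℕ, ∃ i : ℕ, N < cum z i) (m : ℕ) :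
    (graftPt z m).length = ell z m + 1 := by
  rw [graftPt]; simp [bbz_length]

/-! ### zTree membership -/

theorem bbz_mem (θ : ℕ → Set (List ℕ)) (i : ℕ) : bbz z i ∈ zTree z θ :=
  Set.mem_union_left _ ⟨i, rfl⟩

theorem copy_mem {m : ℕ} {w : List ℕ} (hw : w ∈ θ m) : graftPt z m ++ w ∈ zTree z θ :=
  Set.mem_union_right _ (Set.mem_iUnion.2 ⟨m, ⟨w, hw, rfl⟩⟩)

theorem graft_mem (θ : ℕ → Set (List ℕ)) (m : ℕ) (h : [] ∈ θ m) : graftPt z m ∈ zTree z θ := by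
  simpa using copy_mem (θ := θ) h

theorem zTree_cases {x : List ℕ} (hx : x ∈ zTree z θ) :
    (∃ i, x = bbz z i) ∨ ∃ m w, w ∈ θ m ∧ x = graftPt z m ++ w := by
  rcases hx with ⟨i, hi⟩ | hx
  · exact Or.inl ⟨i, hi.symm⟩
  · rw [Set.mem_iUnion] at hx
    obtain ⟨m, w, hw, h⟩ := hx
    exact Or.inr ⟨m, w, hw, h.symm⟩

theorem zTree_prefix_closed (hθ : ∀ i, IsPlaneTree (θ i)) :
    ∀ x ∈ zTree z θ, ∀ p, p <+: x → p ∈ zTree z θ := by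
  intro x hx p hp
  rcases zTree_cases hx with ⟨i, rfl⟩ | ⟨m, w, hw, rfl⟩
  · obtain ⟨i', _, rfl⟩ := prefix_bbz hp
    exact bbz_mem θ i'
  · rcases prefix_append_cases hp with h | ⟨w', hw', rfl⟩
    · rw [graftPt] at h
      rcases List.prefix_concat_iff.1 h with h' | h'
      · rw [h', ← graftPt]
        exact graft_mem θ m (hθ m).1
      · obtain ⟨i', _, rfl⟩ := prefix_bbz h'
        exact bbz_mem θ i'
    · exact copy_mem ((hθ m).2.1 w hw w' hw')

/-! ### children of a vertex in a finite plane tree -/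

theorem children_eq_s9 {θ₀ : Set (List ℕ)} (hθ : IsPlaneTree θ₀) (hfin : θ₀.Finite)
    (w : List ℕ) : {i : ℕ | w ++ [i] ∈ θ₀} = Set.Icc 1 (kv θ₀ w) := by
  have hS : {i : ℕ | w ++ [i] ∈ θ₀}.Finite :=
    hfin.preimage (f := fun i : ℕ => w ++ [i])
      (fun i _ k _ h => by simpa using List.append_cancel_left h)
  rcases eq_or_ne {i : ℕ | w ++ [i] ∈ θ₀} ∅ with he | hne
  · rw [kv, he]; simp
  · have hFne : hS.toFinset.Nonempty := by
      rw [Set.Finite.toFinset_nonempty]; exact Set.nonempty_iff_ne_empty.2 hne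
    set M := hS.toFinset.max' hFne with hM
    have hMmem : w ++ [M] ∈ θ₀ := by
      have := hS.toFinset.max'_mem hFne
      rwa [Set.Finite.mem_toFinset] at this
    have hicc : {i : ℕ | w ++ [i] ∈ θ₀} = Set.Icc 1 M := by
      ext k
      simp only [Set.mem_setOf_eq, Set.mem_Icc]
      constructor
      · intro hk
        refine ⟨hθ.2.2.2 _ hk k (by simp), ?_⟩
        exact hS.toFinset.le_max' k (by rwa [Set.Finite.mem_toFinset])
      · rintro ⟨h1, h2⟩
        exact hθ.2.2.1 w M k hMmem h1 h2
    have hcard : (Set.Icc 1 M).ncard = M := by simp [Set.ncard_eq_toFinset_card']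
    rw [kv, hicc, hcard]


/-- Backbone displacement bounds in a `(z,θ)`-tree whose trees `θ i`
have offspring numbers at most `σ`: if `v = BB_j` is a backbone vertex lying
lexicographically strictly between the copies of `θ n` and `θ (n+1)`
(i.e. `ℓ_n < j ≤ ℓ_{n+1}`), and `u = u_{n+1}` is the root of the copy of `θ (n+1)`
(the smallest non-backbone vertex `≥ v`), then
`|#T^v − #T^u| ≤ 1 + ℓ_{n+1} − ℓ_n` and `|n(v,T) − n(u,T)| ≤ σ + z_{ℓ_{n+1}}`. -/
theorem zTree_backbone_displacement (σ : ℕ) (hσ : 1 ≤ σ)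
    (z : ℕ → ℕ) (θ : ℕ → Set (List ℕ))
    (hθ : ∀ i, IsPlaneTree (θ i)) (hfin : ∀ i, (θ i).Finite)
    (hdeg : ∀ i, ∀ w ∈ θ i, kv (θ i) w ≤ σ)
    (hz : ∀ N : ℕ, ∃ i : ℕ, N < cum z i)
    (n j : ℕ) (hj₁ : ell z n < j) (hj₂ : j ≤ ell z (n + 1)) :
    (|({x ∈ zTree z θ | x ≤ bbz z j}.ncard : ℤ)
        - ({x ∈ zTree z θ | x ≤ graftPt z (n + 1)}.ncard : ℤ)|
      ≤ 1 + (ell z (n + 1) : ℤ) - (ell z n : ℤ)) ∧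
    |(nEdge (zTree z θ) (bbz z j) : ℤ) - (nEdge (zTree z θ) (graftPt z (n + 1)) : ℤ)|
      ≤ (σ : ℤ) + (z (ell z (n + 1)) : ℤ) := by
  classical
  set ℓn := ell z n with hℓndef
  set ℓ := ell z (n + 1) with hℓdef
  set T := zTree z θ with hTdef
  set v := bbz z j with hvdef
  set u := graftPt z (n + 1) with hudef
  -- arithmetic facts
  have hcum_l : cum z ℓ = n + 1 := by
    have h1 : cum z ℓ ≤ n + 1 := ell_le (n + 1)
    have h2 : n < cum z (ℓn + 1) := ell_lt hz n
    have h3 : cum z (ℓn + 1) ≤ cum z ℓ := cum_mono (by omega)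
    omega
  have hzℓ : 1 ≤ z ℓ := by
    have h1 := ell_lt hz (n + 1)
    rw [← hℓdef, cum_succ] at h1
    omega
  have hzmid : ∀ i, j ≤ i → i < ℓ → z i = 0 := by
    intro i h1 h2
    have a1 : cum z (i + 1) ≤ cum z ℓ := cum_mono (by omega)
    have a2 : cum z (ℓn + 1) ≤ cum z i := cum_mono (by omega)
    have a3 := ell_lt hz n
    rw [← hℓndef] at a3
    have a4 := cum_succ (z := z) i
    omega
  have hu_eq : u = bbz z ℓ ++ [1] := by
    rw [hudef, graftPt, ← hℓdef]
    have : n + 1 - cum z ℓ + 1 = 1 := by omega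
    rw [this]
  -- comparison facts
  have hbb_le : ∀ {i i' : ℕ}, i ≤ i' → bbz z i ≤ bbz z i' := fun h => prefix_le (bbz_prefix h)
  have hbb_lt : ∀ {i i' : ℕ}, i < i' → bbz z i < bbz z i' := by
    intro i i' h
    obtain ⟨t, ht⟩ := bbz_decomp (z := z) h
    rw [ht]
    exact prefix_lt_s9 _ (by simp)
  have hvu : v < u := by
    have h1 : v ≤ bbz z ℓ := hbb_le hj₂
    have h2 : bbz z ℓ < u := by rw [hu_eq]; exact prefix_lt_s9 _ (by simp)
    exact lt_of_le_of_lt h1 h2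
  have hu_lt_bb : ∀ i, ℓ < i → u < bbz z i := by
    intro i hi
    obtain ⟨t, ht⟩ := bbz_decomp (z := z) hi
    rw [ht, hu_eq]
    exact mid_lt _ _ _ (by omega)
  have hcopy_lt_bb : ∀ m (w : List ℕ), ∀ i, ell z m < i → graftPt z m ++ w < bbz z i := by
    intro m w i hi
    obtain ⟨h1, h2, h3⟩ := graft_struct hz m
    obtain ⟨t, ht⟩ := bbz_decomp hi
    rw [ht, h3, List.append_assoc, List.singleton_append]
    exact mid_lt _ _ _ (by omega)
  have hcopy_lt_u : ∀ m (w : List ℕ), ell z m < ℓ → graftPt z m ++ w < u := by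
    intro m w hi
    obtain ⟨h1, h2, h3⟩ := graft_struct hz m
    obtain ⟨t, ht⟩ := bbz_decomp hi
    rw [hu_eq, ht, h3, List.append_assoc, List.append_assoc, List.singleton_append,
      List.cons_append]
    exact mid_lt _ _ _ (by omega)
  have hgraft_pre : ∀ m (w : List ℕ), bbz z (ell z m) <+: graftPt z m ++ w := by
    intro m w
    obtain ⟨_, _, h3⟩ := graft_struct hz m
    exact ⟨_, by rw [h3, List.append_assoc]⟩
  -- u is not too long
  have hu_len : u.length = ℓ + 1 := by rw [hu_eq]; simp [bbz_length]
  -- backbone prefix of copies below v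
  have hbb_le_copy : ∀ m (w : List ℕ) i, i ≤ ell z m → bbz z i ≤ graftPt z m ++ w := by
    intro m w i hi
    exact prefix_le ((bbz_prefix hi).trans (hgraft_pre m w))
  ----------------------------------------------------------------
  -- Part 1
  ----------------------------------------------------------------
  have hSid : {x ∈ T | x ≤ u} = {x ∈ T | x ≤ v} ∪ (bbz z '' Set.Ioc j ℓ ∪ {u}) := by
    ext x
    simp only [Set.mem_union, Set.mem_setOf_eq, Set.mem_image, Set.mem_Ioc,
      Set.mem_singleton_iff]
    constructor
    · rintro ⟨hxT, hxu⟩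
      by_cases hxv : x ≤ v
      · exact Or.inl ⟨hxT, hxv⟩
      push_neg at hxv
      right
      rcases zTree_cases hxT with ⟨i, rfl⟩ | ⟨m, w, hw, rfl⟩
      · left
        refine ⟨i, ⟨?_, ?_⟩, rfl⟩
        · by_contra h
          push_neg at h
          exact absurd (hbb_le h) (not_le.2 hxv)
        · by_contra h
          push_neg at h
          exact absurd hxu (not_le.2 (hu_lt_bb i h))
      · obtain ⟨h1, h2, h3⟩ := graft_struct hz m
        rcases lt_or_ge (ell z m) j with him | him
        · exact absurd (hcopy_lt_bb m w j him) (not_lt.2 hxv.le)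
        rcases lt_or_ge (ell z m) ℓ with him2 | him2
        · have := hzmid (ell z m) him him2
          omega
        rcases lt_or_ge ℓ (ell z m) with him3 | him3
        · have : u < graftPt z m ++ w :=
            lt_of_lt_of_le (hu_lt_bb (ell z m) him3) (prefix_le (hgraft_pre m w))
          exact absurd hxu (not_le.2 this)
        · have him4 : ell z m = ℓ := le_antisymm him3 him2
          have hm1 : cum z ℓ ≤ m := by rw [← him4]; exact ell_le m
          rcases eq_or_lt_of_le (show n + 1 ≤ m by omega) with rfl | hm2
          · cases w with
            | nil => right; simp [hudef]
            | cons a w' =>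
              exact absurd hxu (not_le.2 (prefix_lt_s9 _ (by simp)))
          · have : u < graftPt z m ++ w := by
              rw [hu_eq, h3, List.append_assoc, List.singleton_append, him4]
              exact mid_lt _ _ _ (by omega)
            exact absurd hxu (not_le.2 this)
    · rintro (⟨hxT, hxv⟩ | ⟨i, ⟨hi1, hi2⟩, rfl⟩ | rfl)
      · exact ⟨hxT, le_trans hxv hvu.le⟩
      · exact ⟨bbz_mem θ i, le_trans (hbb_le hi2) (by rw [hu_eq]; exact prefix_le ⟨[1], rfl⟩)⟩
      · exact ⟨graft_mem θ (n + 1) (hθ (n + 1)).1, le_refl u⟩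
  have hdisj : Disjoint {x ∈ T | x ≤ v} (bbz z '' Set.Ioc j ℓ ∪ {u}) := by
    rw [Set.disjoint_left]
    rintro x ⟨hxT, hxv⟩ hx2
    rcases hx2 with ⟨i, ⟨hi1, _⟩, rfl⟩ | rfl
    · exact absurd hxv (not_le.2 (hbb_lt hi1))
    · exact absurd hxv (not_le.2 hvu)
  have hAv_fin : {x ∈ T | x ≤ v}.Finite := by
    apply Set.Finite.subset (Set.Finite.union ((Set.finite_Iic j).image (bbz z))
      (Set.Finite.biUnion (Set.finite_Iio (cum z j))
        (fun m _ => (hfin m).image (fun w => graftPt z m ++ w))))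
    rintro x ⟨hxT, hxv⟩
    rcases zTree_cases hxT with ⟨i, rfl⟩ | ⟨m, w, hw, rfl⟩
    · left
      refine ⟨i, ?_, rfl⟩
      simp only [Set.mem_Iic]
      by_contra h
      push_neg at h
      exact absurd hxv (not_le.2 (hbb_lt h))
    · right
      refine Set.mem_biUnion ?_ ⟨w, hw, rfl⟩
      simp only [Set.mem_Iio]
      have him : ell z m < j := by
        by_contra h
        push_neg at h
        have hpre : v <+: graftPt z m ++ w := (bbz_prefix h).trans (hgraft_pre m w)
        have hlen : v.length < (graftPt z m ++ w).length := by
          rw [hvdef, bbz_length, List.length_append, graft_length hz]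
          omega
        exact absurd hxv (not_le.2 (lt_of_proper_prefix hpre hlen))
      calc m < cum z (ell z m + 1) := ell_lt hz m
      _ ≤ cum z j := cum_mono (by omega)
  have hS_fin : (bbz z '' Set.Ioc j ℓ ∪ {u}).Finite :=
    ((Set.finite_Ioc j ℓ).image _).union (Set.finite_singleton u)
  have hbb_inj : Function.Injective (bbz z) := fun a b h => by
    have := congrArg List.length h
    rwa [bbz_length, bbz_length] at this
  have hScard : (bbz z '' Set.Ioc j ℓ ∪ {u}).ncard = ℓ - j + 1 := by
    rw [Set.union_singleton,
      Set.ncard_insert_of_notMem ?_ ((Set.finite_Ioc j ℓ).image _),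
      Set.ncard_image_of_injective _ hbb_inj]
    · simp [Set.ncard_eq_toFinset_card']
    · rintro ⟨i, ⟨hi1, hi2⟩, hi3⟩
      have := congrArg List.length hi3
      rw [bbz_length, hu_len] at this
      omega
  have hcard : {x ∈ T | x ≤ u}.ncard = {x ∈ T | x ≤ v}.ncard + (ℓ - j + 1) := by
    rw [hSid, Set.ncard_union_eq hdisj hAv_fin hS_fin, hScard]
  refine ⟨?_, ?_⟩
  · rw [hcard]
    rw [abs_le]
    constructor <;> push_cast <;> omega
  ----------------------------------------------------------------
  -- Part 2
  ----------------------------------------------------------------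
  have hTpre := zTree_prefix_closed (z := z) hθ
  have hdl_ge2 : ∀ m (a : ℕ) (w' : List ℕ),
      graftPt z m <+: (graftPt z m ++ (a :: w')).dropLast := by
    intro m a w'
    rcases (a :: w').eq_nil_or_concat' with h | ⟨w'', b, hb⟩
    · simp at h
    · rw [hb, ← List.append_assoc, List.dropLast_concat]
      exact ⟨w'', rfl⟩
  have hdl_ge : ∀ m (w : List ℕ), bbz z (ell z m) <+: (graftPt z m ++ w).dropLast := by
    intro m w
    obtain ⟨_, _, hc3⟩ := graft_struct hz m
    cases w with
    | nil => rw [List.append_nil, hc3, List.dropLast_concat]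
    | cons a w' =>
      refine List.IsPrefix.trans ⟨[m - cum z (ell z m) + 1], hc3.symm⟩ (hdl_ge2 m a w')
  have hcrossEq : ∀ y : List ℕ,
      nEdge T y = {c ∈ T | c ≠ [] ∧ c.dropLast ≤ y ∧ ¬ c ≤ y}.ncard := by
    intro y
    rw [hTdef, nEdge]
    congr 1
    ext c
    simp only [Set.mem_setOf_eq, below, Xor']
    constructor
    · rintro ⟨hc, hne, hx⟩
      refine ⟨hc, hne, ?_⟩
      have hd : c.dropLast ∈ zTree z θ := hTpre c hc _ (List.dropLast_prefix c)
      rcases hx with ⟨⟨_, h1⟩, h2⟩ | ⟨⟨_, h1⟩, h2⟩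
      · exact ⟨h1, fun hcy => h2 ⟨hc, hcy⟩⟩
      · exact absurd ⟨hd, le_trans (prefix_le (List.dropLast_prefix c)) h1⟩ h2
    · rintro ⟨hc, hne, h1, h2⟩
      exact ⟨hc, hne, Or.inl ⟨⟨hTpre c hc _ (List.dropLast_prefix c), h1⟩,
        fun hcb => h2 hcb.2⟩⟩
  -- the crossing set of v
  have hEv : {c ∈ T | c ≠ [] ∧ c.dropLast ≤ v ∧ ¬ c ≤ v}
      = insert (bbz z (j + 1)) ((fun k => bbz z j ++ [k]) '' Set.Icc 1 (z j)) := by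
    ext c
    simp only [Set.mem_setOf_eq, Set.mem_insert_iff, Set.mem_image, Set.mem_Icc]
    constructor
    · rintro ⟨hc, hne, h1, h2⟩
      push_neg at h2
      rcases zTree_cases hc with ⟨i, rfl⟩ | ⟨m, w, hw, rfl⟩
      · cases i with
        | zero => exact absurd rfl hne
        | succ i =>
          left
          have hd : (bbz z (i + 1)).dropLast = bbz z i := by
            rw [bbz]; exact List.dropLast_concat
          rw [hd] at h1
          have hi1 : i ≤ j := by
            by_contra h
            push_neg at h
            exact absurd h1 (not_le.2 (hbb_lt h))
          have hi2 : j < i + 1 := by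
            by_contra h
            push_neg at h
            exact absurd (hbb_le h) (not_le.2 h2)
          have hij : i = j := by omega
          rw [hij]
      · obtain ⟨hc1, hc2, hc3⟩ := graft_struct hz m
        rcases lt_trichotomy (ell z m) j with h | h | h
        · exact absurd h2 (not_lt.2 (hcopy_lt_bb m w j h).le)
        · cases w with
          | nil =>
            right
            refine ⟨m - cum z (ell z m) + 1, ⟨hc1, ?_⟩, ?_⟩
            · rw [h] at hc2 ⊢; exact hc2
            · simp [hc3, h]
          | cons a w' =>
            exfalso
            have hgd := hdl_ge2 m a w'
            have hvg : v < graftPt z m := by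
              rw [hvdef, hc3, h]
              exact prefix_lt_s9 _ (by simp)
            exact absurd (le_trans (prefix_le hgd) h1) (not_le.2 hvg)
        · exfalso
          have h1' := le_trans (prefix_le (hdl_ge m w)) h1
          exact absurd h1' (not_le.2 (by rw [hvdef]; exact hbb_lt h))
    · rintro (rfl | ⟨k, ⟨hk1, hk2⟩, rfl⟩)
      · refine ⟨bbz_mem θ (j + 1), ?_, ?_, ?_⟩
        · rw [bbz]; simp
        · rw [bbz, List.dropLast_concat, hvdef]
        · rw [bbz, hvdef]
          exact not_le.2 (prefix_lt_s9 _ (by simp))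
      · obtain ⟨hg, he⟩ := graft_inv (z := z) hk1 hk2
        refine ⟨?_, by simp, ?_, ?_⟩
        · rw [← hg]; exact graft_mem θ _ (hθ _).1
        · rw [List.dropLast_concat, hvdef]
        · rw [hvdef]
          exact not_le.2 (prefix_lt_s9 _ (by simp))
  have hEvcard : nEdge T v = z j + 1 := by
    rw [hcrossEq v, hEv]
    have himg : ((fun k => bbz z j ++ [k]) '' Set.Icc 1 (z j)).Finite :=
      (Set.finite_Icc 1 (z j)).image _
    rw [Set.ncard_insert_of_notMem ?_ himg,
      Set.ncard_image_of_injective _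
        (fun a b hab => by simpa using List.append_cancel_left hab)]
    · simp [Set.ncard_eq_toFinset_card']
    · rintro ⟨k, ⟨hk1, hk2⟩, hk3⟩
      simp only [bbz] at hk3
      have := List.append_cancel_left hk3
      simp at this
      omega
  -- the crossing set of u
  set k₀ := kv (θ (n + 1)) [] with hk₀def
  have hchild : {k : ℕ | [k] ∈ θ (n + 1)} = Set.Icc 1 k₀ := by
    have h := children_eq_s9 (hθ (n + 1)) (hfin (n + 1)) []
    simpa using h
  have hEu : {c ∈ T | c ≠ [] ∧ c.dropLast ≤ u ∧ ¬ c ≤ u}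
      = ((fun k => bbz z ℓ ++ [k]) '' Set.Icc 2 (z ℓ + 1))
        ∪ ((fun k => u ++ [k]) '' Set.Icc 1 k₀) := by
    ext c
    simp only [Set.mem_setOf_eq, Set.mem_union, Set.mem_image, Set.mem_Icc]
    constructor
    · rintro ⟨hc, hne, h1, h2⟩
      push_neg at h2
      rcases zTree_cases hc with ⟨i, rfl⟩ | ⟨m, w, hw, rfl⟩
      · cases i with
        | zero => exact absurd rfl hne
        | succ i =>
          left
          have hd : (bbz z (i + 1)).dropLast = bbz z i := by
            rw [bbz]; exact List.dropLast_concat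
          rw [hd] at h1
          have hi1 : i ≤ ℓ := by
            by_contra h
            push_neg at h
            exact absurd h1 (not_le.2 (hu_lt_bb i h))
          have hi2 : ℓ < i + 1 := by
            by_contra h
            push_neg at h
            have hle : bbz z (i + 1) ≤ u := by
              calc bbz z (i + 1) ≤ bbz z ℓ := hbb_le h
              _ ≤ u := by rw [hu_eq]; exact prefix_le ⟨[1], rfl⟩
            exact absurd hle (not_le.2 h2)
          have hieq : i = ℓ := by omega
          refine ⟨z ℓ + 1, ⟨by omega, le_refl _⟩, ?_⟩
          rw [hieq, bbz]
      · obtain ⟨hc1, hc2, hc3⟩ := graft_struct hz m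
        rcases lt_trichotomy (ell z m) ℓ with h | h | h
        · exact absurd h2 (not_lt.2 (hcopy_lt_u m w h).le)
        · have hm1 : cum z ℓ ≤ m := by rw [← h]; exact ell_le m
          rcases eq_or_lt_of_le (show n + 1 ≤ m by omega) with rfl | hm2
          · right
            cases w with
            | nil =>
              exfalso
              rw [List.append_nil, ← hudef] at h2
              exact lt_irrefl u h2
            | cons a w' =>
              have hdl : (graftPt z (n + 1) ++ (a :: w')).dropLast
                  = graftPt z (n + 1) ++ (a :: w').dropLast :=
                List.dropLast_append_of_ne_nil (by simp)
              rw [hdl] at h1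
              have hw0 : (a :: w').dropLast = [] := by
                by_contra hne2
                have hlt : u < graftPt z (n + 1) ++ (a :: w').dropLast := by
                  rw [hudef]; exact prefix_lt_s9 _ hne2
                exact absurd h1 (not_le.2 hlt)
              have hw' : w' = [] := by
                cases w' with
                | nil => rfl
                | cons b t => simp at hw0
              subst hw'
              have hak : a ∈ Set.Icc 1 k₀ := by rw [← hchild]; exact hw
              exact ⟨a, ⟨hak.1, hak.2⟩, by rw [hudef]⟩
          · left
            have hcm2 : 2 ≤ m - cum z (ell z m) + 1 := by rw [h]; omega
            cases w with
            | nil =>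
              refine ⟨m - cum z (ell z m) + 1, ⟨hcm2, ?_⟩, ?_⟩
              · rw [h] at hc2 ⊢; omega
              · simp [hc3, h]
            | cons a w' =>
              exfalso
              have hgd := hdl_ge2 m a w'
              have hgu : u < graftPt z m := by
                rw [hu_eq, hc3, h]
                exact mid_lt _ _ _ (by omega)
              exact absurd (le_trans (prefix_le hgd) h1) (not_le.2 hgu)
        · exfalso
          have h1' := le_trans (prefix_le (hdl_ge m w)) h1
          exact absurd h1' (not_le.2 (hu_lt_bb _ h))
    · rintro (⟨k, ⟨hk1, hk2⟩, rfl⟩ | ⟨k, ⟨hk1, hk2⟩, rfl⟩)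
      · have hmemT : bbz z ℓ ++ [k] ∈ T := by
          rcases eq_or_lt_of_le hk2 with heq | hlt
          · rw [heq]
            have hb : bbz z ℓ ++ [z ℓ + 1] = bbz z (ℓ + 1) := rfl
            rw [hb]
            exact bbz_mem θ (ℓ + 1)
          · obtain ⟨hg, _⟩ := graft_inv (z := z) (show 1 ≤ k by omega)
              (show k ≤ z ℓ by omega)
            rw [← hg]
            exact graft_mem θ _ (hθ _).1
        refine ⟨hmemT, by simp, ?_, ?_⟩
        · rw [List.dropLast_concat, hu_eq]
          exact prefix_le ⟨[1], rfl⟩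
        · rw [hu_eq]
          exact not_le.2 (mid_lt _ _ _ (by omega))
      · have hkθ : [k] ∈ θ (n + 1) := by
          have hk : k ∈ Set.Icc 1 k₀ := ⟨hk1, hk2⟩
          rw [← hchild] at hk
          exact hk
        refine ⟨by rw [hudef]; exact copy_mem hkθ, by simp, ?_, ?_⟩
        · rw [List.dropLast_concat]
        · exact not_le.2 (prefix_lt_s9 _ (by simp))
  have hEucard : nEdge T u = z ℓ + k₀ := by
    rw [hcrossEq u, hEu]
    have hf1 : ((fun k => bbz z ℓ ++ [k]) '' Set.Icc 2 (z ℓ + 1)).Finite :=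
      (Set.finite_Icc _ _).image _
    have hf2 : ((fun k => u ++ [k]) '' Set.Icc 1 k₀).Finite :=
      (Set.finite_Icc _ _).image _
    rw [Set.ncard_union_eq ?_ hf1 hf2,
      Set.ncard_image_of_injective _
        (fun a b hab => by simpa using List.append_cancel_left hab),
      Set.ncard_image_of_injective _
        (fun a b hab => by simpa using List.append_cancel_left hab)]
    · simp [Set.ncard_eq_toFinset_card']
      try omega
    · rw [Set.disjoint_left]
      rintro x ⟨k, _, rfl⟩ ⟨k', _, hx⟩
      have hlen := congrArg List.length hx
      rw [List.length_append, List.length_append, hu_len, bbz_length] at hlen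
      simp only [List.length_singleton] at hlen
      omega
  have hzjℓ : z j ≤ z ℓ := by
    rcases eq_or_lt_of_le hj₂ with heq | hlt
    · rw [heq]
    · rw [hzmid j (le_refl j) hlt]
      omega
  have hk₀σ : k₀ ≤ σ := hdeg (n + 1) [] (hθ (n + 1)).1
  rw [hEvcard, hEucard, abs_le]
  constructor <;> push_cast <;> omega


end IPC
end
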